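/- arXiv:2002.03979 — 3 statements merged into one kernel-verified Lean document; each statement's English description precedes it below -/
import Mathlib

section
/- Let A be symmetric positive definite with smallest eigenvalue λ_A > 0, step sizes η_k = η k^{-α} with 1/2 < α < 1 and η λ_max(A) ≤ 1, and define Y_i^k = ∏_{p=i+1}^{k} (I - η_p A) and S_i^j = ∑_{k=i+1}^{j} Y_i^k. Then there exists a constant C independent of i, j such that ‖S_i^j‖ ≤ C (i+1)^{α}. -/
open Finset Real Matrix
open scoped Matrix.Norms.L2Operator

private lemma bern_aux {α x : ℝ} (hα0 : 0 ≤ α) (hα1 : α ≤ 1) (hx : 1 ≤ x) :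
    (x + 1) ^ α ≤ x ^ α + α * x ^ (α - 1) := by
  have hx0 : (0:ℝ) < x := lt_of_lt_of_le one_pos hx
  have h1 : x + 1 = x * (1 + x⁻¹) := by field_simp
  have h2 : (x + 1) ^ α = x ^ α * (1 + x⁻¹) ^ α := by
    rw [h1, Real.mul_rpow hx0.le (by positivity)]
  have h3 : (1 + x⁻¹) ^ α ≤ 1 + α * x⁻¹ :=
    rpow_one_add_le_one_add_mul_self (by have := inv_nonneg.mpr hx0.le; linarith) hα0 hα1
  have h4 : x ^ (α - 1) = x ^ α * x⁻¹ := by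
    rw [Real.rpow_sub hx0, Real.rpow_one, div_eq_mul_inv]
  calc (x+1)^α = x^α * (1 + x⁻¹)^α := h2
    _ ≤ x^α * (1 + α * x⁻¹) :=
        mul_le_mul_of_nonneg_left h3 (Real.rpow_nonneg hx0.le α)
    _ = x^α + α * x^(α-1) := by rw [h4]; ring

private lemma sum_prod_aux {α b : ℝ} (hα0 : 0 < α) (hα1 : α ≤ 1) (hb0 : 0 < b) (hb1 : b ≤ 1)
    (i : ℕ) (hbig : α * ((i:ℝ) + 1) ^ (α - 1) ≤ b / 2) (j : ℕ) :
    ∑ k ∈ Finset.Ioc i j, (∏ p ∈ Finset.Ioc i k, (1 - b * (p:ℝ) ^ (-α)))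
      ≤ 2 / b * ((i:ℝ) + 1) ^ α := by
  have ht0 : ∀ p : ℕ, 0 ≤ (p:ℝ) ^ (-α) := fun p => Real.rpow_nonneg (Nat.cast_nonneg p) _
  have ht1 : ∀ p : ℕ, 1 ≤ p → (p:ℝ) ^ (-α) ≤ 1 := fun p hp =>
    Real.rpow_le_one_of_one_le_of_nonpos (by exact_mod_cast hp) (by linarith)
  have hfac0 : ∀ p : ℕ, 1 ≤ p → 0 ≤ 1 - b * (p:ℝ) ^ (-α) := by
    intro p hp
    nlinarith [ht0 p, ht1 p hp]
  have ha0 : ∀ k, 0 ≤ ∏ p ∈ Finset.Ioc i k, (1 - b * (p:ℝ) ^ (-α)) := by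
    intro k
    refine Finset.prod_nonneg fun p hp => hfac0 p ?_
    have := (Finset.mem_Ioc.mp hp).1; omega
  have hone : (1:ℝ) ≤ ((i:ℝ) + 1) ^ α :=
    Real.one_le_rpow (by have := Nat.cast_nonneg (α := ℝ) i; linarith) hα0.le
  suffices H : ∀ j : ℕ, (∑ k ∈ Finset.Ioc i j, ∏ p ∈ Finset.Ioc i k, (1 - b * (p:ℝ) ^ (-α)))
      + 2 / b * ((∏ p ∈ Finset.Ioc i j, (1 - b * (p:ℝ) ^ (-α))) * ((j:ℝ) + 1) ^ α)
      ≤ 2 / b * ((i:ℝ) + 1) ^ α by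
    have h := H j
    have hnn : 0 ≤ 2 / b * ((∏ p ∈ Finset.Ioc i j, (1 - b * (p:ℝ) ^ (-α))) * ((j:ℝ) + 1) ^ α) := by
      have := ha0 j
      positivity
    linarith
  intro j
  induction j with
  | zero =>
      rw [Finset.Ioc_eq_empty (by omega)]
      simp only [Finset.sum_empty, Finset.prod_empty, Nat.cast_zero, zero_add, one_mul,
        Real.one_rpow, zero_add]
      have h2b : 0 < 2 / b := by positivity
      nlinarith
  | succ j IH =>
      rcases lt_or_ge j i with hji | hij
      · rw [show Finset.Ioc i (j+1) = ∅ from Finset.Ioc_eq_empty (by omega)]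
        simp only [Finset.sum_empty, Finset.prod_empty, one_mul, zero_add]
        have hle : ((j:ℝ) + 1) + 1 ≤ (i:ℝ) + 1 := by
          have h2 : ((j:ℕ) + 2 : ℝ) ≤ ((i:ℕ) + 1 : ℝ) := by exact_mod_cast (by omega : j + 2 ≤ i + 1)
          push_cast at h2 ⊢; linarith
        refine mul_le_mul_of_nonneg_left ?_ (by positivity)
        push_cast
        push_cast at hle
        exact Real.rpow_le_rpow (by positivity) hle hα0.le
      · rw [Finset.sum_Ioc_succ_top hij, Finset.prod_Ioc_succ_top hij]
        set x : ℝ := (j:ℝ) + 1 with hxdef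
        have hx1 : (1:ℝ) ≤ x := by rw [hxdef]; have : (0:ℝ) ≤ (j:ℝ) := Nat.cast_nonneg j; linarith
        have hxi : (i:ℝ) + 1 ≤ x := by
          rw [hxdef]; have : (i:ℝ) ≤ (j:ℝ) := Nat.cast_le.mpr hij; linarith
        have hx0 : (0:ℝ) < x := by linarith
        have hcast : ((j+1 : ℕ) : ℝ) = x := by push_cast [hxdef]; ring
        set t : ℝ := x ^ (-α) with htdef
        have ht0' : 0 ≤ t := Real.rpow_nonneg hx0.le _
        have ht1' : t ≤ 1 := Real.rpow_le_one_of_one_le_of_nonpos hx1 (by linarith)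
        have htx : t * x ^ α = 1 := by
          rw [htdef, ← Real.rpow_add hx0]; simp
        have hb4 : (x+1) ^ α ≤ x ^ α + α * x ^ (α - 1) := bern_aux hα0.le hα1 hx1
        have hb5 : α * x ^ (α - 1) ≤ b / 2 := by
          refine le_trans ?_ hbig
          refine mul_le_mul_of_nonneg_left ?_ hα0.le
          exact Real.rpow_le_rpow_of_nonpos (by positivity) hxi (by linarith)
        have hb6 : x ^ α ≤ (x+1) ^ α := Real.rpow_le_rpow hx0.le (by linarith) hα0.le
        have hxa0 : (0:ℝ) ≤ x ^ α := Real.rpow_nonneg hx0.le _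
        have hbtx : b * t * x ^ α = b := by rw [mul_assoc, htx, mul_one]
        have key2 : b/2 * (1 - b*t) + (1 - b*t) * (x+1)^α ≤ x^α := by
          nlinarith [mul_le_mul_of_nonneg_left hb6 (mul_nonneg hb0.le ht0'),
            mul_nonneg (mul_nonneg hb0.le hb0.le) ht0']
        have key : (1 - b*t) + 2/b * ((1 - b*t) * (x+1)^α) ≤ 2/b * x^α := by
          have hrw : (1 - b*t) + 2/b * ((1 - b*t) * (x+1)^α)
              = 2/b * (b/2 * (1 - b*t) + (1 - b*t) * (x+1)^α) := by
            field_simp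
          rw [hrw]
          exact mul_le_mul_of_nonneg_left key2 (by positivity)
        have hP := ha0 j
        set P : ℝ := ∏ p ∈ Finset.Ioc i j, (1 - b * (p:ℝ) ^ (-α)) with hPdef
        rw [hcast]
        have hkeyP := mul_le_mul_of_nonneg_left key hP
        nlinarith [IH]

set_option maxHeartbeats 1600000 in
theorem opNorm_sum_sgd_contraction_prods_le
    (d : ℕ) (A : Matrix (Fin d) (Fin d) ℝ) (hA : A.PosDef)
    (lamA lamMax η α : ℝ) (hlamA : 0 < lamA)
    (hmin : ∀ x : Fin d → ℝ, lamA * (x ⬝ᵥ x) ≤ x ⬝ᵥ A.mulVec x)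
    (hmax : ∀ x : Fin d → ℝ, x ⬝ᵥ A.mulVec x ≤ lamMax * (x ⬝ᵥ x))
    (hη : 0 < η) (hα1 : 1/2 < α) (hα2 : α < 1)
    (hstep : η * lamMax ≤ 1)
    (ηk : ℕ → ℝ) (hηk : ∀ k : ℕ, ηk k = η * (k:ℝ) ^ (-α))
    (Y : ℕ → ℕ → Matrix (Fin d) (Fin d) ℝ)
    (hY0 : ∀ i : ℕ, Y i i = 1)
    (hYrec : ∀ i k : ℕ, i ≤ k → Y i (k+1) = (1 - ηk (k+1) • A) * Y i k)
    (S : ℕ → ℕ → Matrix (Fin d) (Fin d) ℝ)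
    (hS : ∀ i j : ℕ, S i j = ∑ k ∈ Finset.Icc (i+1) j, Y i k) :
    ∃ C : ℝ, 0 < C ∧ ∀ i j : ℕ, ‖S i j‖ ≤ C * ((i:ℝ) + 1) ^ α := by
  have hα0 : 0 < α := by linarith
  rcases Nat.eq_zero_or_pos d with hd | hd
  · subst hd
    refine ⟨1, one_pos, fun i j => ?_⟩
    have h0 : S i j = 0 := Subsingleton.elim _ _
    rw [h0, norm_zero, one_mul]
    positivity
  -- d > 0
  have hIK : Nonempty (Fin d) := ⟨⟨0, hd⟩⟩
  obtain ⟨i0⟩ := hIK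
  have hAmono : lamA ≤ lamMax := by
    set v : Fin d → ℝ := Pi.single i0 1 with hv
    have hvv : v ⬝ᵥ v = 1 := by
      rw [hv, dotProduct_single, Pi.single_eq_same, mul_one]
    have h1 := hmin v; have h2 := hmax v; rw [hvv] at h1 h2; linarith
  have hlamM : 0 < lamMax := lt_of_lt_of_le hlamA hAmono
  obtain ⟨b, hbdef⟩ : ∃ b : ℝ, b = η * lamA / 2 := ⟨_, rfl⟩
  have hb0 : 0 < b := by rw [hbdef]; positivity
  have hb2 : 2 * b ≤ 1 := by
    have h1 : η * lamA ≤ η * lamMax := by nlinarith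
    rw [hbdef]; linarith
  have hb1 : b ≤ 1 := by linarith
  -- basic dot product facts
  have hdotself : ∀ u : Fin d → ℝ, 0 ≤ u ⬝ᵥ u := fun u =>
    Finset.sum_nonneg fun i _ => mul_self_nonneg (u i)
  have hq : ∀ u : Fin d → ℝ, 0 ≤ u ⬝ᵥ A.mulVec u := fun u =>
    le_trans (by nlinarith [hdotself u]) (hmin u)
  have hAT : Aᵀ = A := by
    have h := hA.1
    rwa [Matrix.IsHermitian, Matrix.conjTranspose_eq_transpose_of_trivial] at h
  have hsymm : ∀ u w : Fin d → ℝ, u ⬝ᵥ A.mulVec w = w ⬝ᵥ A.mulVec u := by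
    intro u w
    have h' : u ᵥ* A = A *ᵥ u := by rw [← Matrix.vecMul_transpose, hAT]
    rw [Matrix.dotProduct_mulVec, h']
    exact dotProduct_comm _ _
  have hCS : ∀ u w : Fin d → ℝ,
      (u ⬝ᵥ A.mulVec w)^2 ≤ (u ⬝ᵥ A.mulVec u) * (w ⬝ᵥ A.mulVec w) := by
    intro u w
    have hd0 : discrim (w ⬝ᵥ A.mulVec w) (2 * (u ⬝ᵥ A.mulVec w)) (u ⬝ᵥ A.mulVec u) ≤ 0 := by
      apply discrim_le_zero
      intro s
      have hexp : (w ⬝ᵥ A.mulVec w) * (s*s) + 2*(u ⬝ᵥ A.mulVec w)*s + u ⬝ᵥ A.mulVec u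
          = (u + s • w) ⬝ᵥ A.mulVec (u + s • w) := by
        rw [Matrix.mulVec_add, Matrix.mulVec_smul]
        simp only [dotProduct_add, add_dotProduct, dotProduct_smul,
          smul_dotProduct, smul_eq_mul]
        rw [hsymm w u]
        ring
      rw [hexp]
      exact hq _
    rw [discrim] at hd0
    nlinarith [hd0]
  have hAv : ∀ u : Fin d → ℝ,
      (A.mulVec u) ⬝ᵥ (A.mulVec u) ≤ lamMax * (u ⬝ᵥ A.mulVec u) := by
    intro u
    set w := A.mulVec u with hw
    have h1 : u ⬝ᵥ A.mulVec w = w ⬝ᵥ w := by rw [hsymm u w, ← hw]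
    have h2 := hCS u w
    have h3 := hmax w
    have h4 := hq u
    rcases eq_or_lt_of_le (hdotself w) with h0 | h0
    · rw [← h0]
      exact mul_nonneg hlamM.le h4
    · rw [h1] at h2
      have h5 : (w ⬝ᵥ w)^2 ≤ (u ⬝ᵥ A.mulVec u) * (lamMax * (w ⬝ᵥ w)) :=
        le_trans h2 (mul_le_mul_of_nonneg_left h3 h4)
      nlinarith
  -- per-step bound
  have hstep1 : ∀ p : ℕ, 1 ≤ p → ∀ u : Fin d → ℝ,
      ((1 - ηk p • A) *ᵥ u) ⬝ᵥ ((1 - ηk p • A) *ᵥ u)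
        ≤ (1 - 2 * b * (p:ℝ)^(-α)) * (u ⬝ᵥ u) := by
    intro p hp u
    have ht0 : 0 ≤ (p:ℝ)^(-α) := Real.rpow_nonneg (Nat.cast_nonneg p) _
    have ht1 : (p:ℝ)^(-α) ≤ 1 :=
      Real.rpow_le_one_of_one_le_of_nonpos (by exact_mod_cast hp) (by linarith)
    have hs' : ηk p = η * (p:ℝ)^(-α) := hηk p
    have hs0 : 0 ≤ ηk p := by rw [hs']; positivity
    have hsM : ηk p * lamMax ≤ 1 := by
      rw [hs']
      nlinarith [mul_pos hη hlamM]
    have hBu : (1 - ηk p • A) *ᵥ u = u - ηk p • (A *ᵥ u) := by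
      rw [Matrix.sub_mulVec, Matrix.one_mulVec, Matrix.smul_mulVec]
    rw [hBu]
    have hexp : (u - ηk p • A.mulVec u) ⬝ᵥ (u - ηk p • A.mulVec u)
        = u ⬝ᵥ u - 2*(ηk p)*(u ⬝ᵥ A.mulVec u)
          + (ηk p)^2 * ((A.mulVec u) ⬝ᵥ (A.mulVec u)) := by
      simp only [dotProduct_sub, sub_dotProduct, dotProduct_smul,
        smul_dotProduct, smul_eq_mul]
      rw [dotProduct_comm (A.mulVec u) u]
      ring
    rw [hexp]
    have h1 := hAv u
    have h2 := hq u
    have h3 := hmin u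
    have h4 := hdotself u
    have h2bt : 2*b*(p:ℝ)^(-α) = ηk p * lamA := by rw [hs', hbdef]; ring
    have hA1 : (ηk p)^2 * ((A.mulVec u) ⬝ᵥ (A.mulVec u))
        ≤ (ηk p)^2 * (lamMax * (u ⬝ᵥ A.mulVec u)) :=
      mul_le_mul_of_nonneg_left h1 (sq_nonneg _)
    have hA2 : (0:ℝ) ≤ (1 - ηk p * lamMax) * (ηk p * (u ⬝ᵥ A.mulVec u)) :=
      mul_nonneg (by linarith) (mul_nonneg hs0 h2)
    have hA3 : ηk p * (lamA * (u ⬝ᵥ u)) ≤ ηk p * (u ⬝ᵥ A.mulVec u) :=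
      mul_le_mul_of_nonneg_left h3 hs0
    nlinarith [hA1, hA2, hA3]
  have hstep2 : ∀ p : ℕ, 1 ≤ p → ∀ u : Fin d → ℝ,
      Real.sqrt (((1 - ηk p • A) *ᵥ u) ⬝ᵥ ((1 - ηk p • A) *ᵥ u))
        ≤ (1 - b * (p:ℝ)^(-α)) * Real.sqrt (u ⬝ᵥ u) := by
    intro p hp u
    have ht0 : 0 ≤ (p:ℝ)^(-α) := Real.rpow_nonneg (Nat.cast_nonneg p) _
    have ht1 : (p:ℝ)^(-α) ≤ 1 :=
      Real.rpow_le_one_of_one_le_of_nonpos (by exact_mod_cast hp) (by linarith)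
    have hmm : 2*b*(p:ℝ)^(-α) ≤ 2*b*1 := mul_le_mul_of_nonneg_left ht1 (by linarith)
    have h2bt1 : 2*b*(p:ℝ)^(-α) ≤ 1 := by linarith
    have hfac : 0 ≤ 1 - b*(p:ℝ)^(-α) := by nlinarith [mul_nonneg hb0.le ht0]
    calc Real.sqrt (((1 - ηk p • A) *ᵥ u) ⬝ᵥ ((1 - ηk p • A) *ᵥ u))
        ≤ Real.sqrt ((1 - 2*b*(p:ℝ)^(-α)) * (u ⬝ᵥ u)) := Real.sqrt_le_sqrt (hstep1 p hp u)
      _ = Real.sqrt (1 - 2*b*(p:ℝ)^(-α)) * Real.sqrt (u ⬝ᵥ u) := Real.sqrt_mul (by linarith) _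
      _ ≤ (1 - b*(p:ℝ)^(-α)) * Real.sqrt (u ⬝ᵥ u) := by
          refine mul_le_mul_of_nonneg_right ?_ (Real.sqrt_nonneg _)
          have hsq : 1 - 2*b*(p:ℝ)^(-α) ≤ (1 - b*(p:ℝ)^(-α))^2 := by nlinarith [sq_nonneg (b*(p:ℝ)^(-α))]
          calc Real.sqrt (1 - 2*b*(p:ℝ)^(-α)) ≤ Real.sqrt ((1 - b*(p:ℝ)^(-α))^2) :=
                Real.sqrt_le_sqrt hsq
            _ = 1 - b*(p:ℝ)^(-α) := Real.sqrt_sq hfac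
  -- factors nonneg / le one
  have hfac0 : ∀ p : ℕ, 1 ≤ p → 0 ≤ 1 - b * (p:ℝ)^(-α) := by
    intro p hp
    have ht0 : 0 ≤ (p:ℝ)^(-α) := Real.rpow_nonneg (Nat.cast_nonneg p) _
    have ht1 : (p:ℝ)^(-α) ≤ 1 :=
      Real.rpow_le_one_of_one_le_of_nonpos (by exact_mod_cast hp) (by linarith)
    have hmm : b*(p:ℝ)^(-α) ≤ b*1 := mul_le_mul_of_nonneg_left ht1 hb0.le
    linarith
  have hfac1 : ∀ p : ℕ, 1 - b * (p:ℝ)^(-α) ≤ 1 := by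
    intro p
    have ht0 : 0 ≤ (p:ℝ)^(-α) := Real.rpow_nonneg (Nat.cast_nonneg p) _
    linarith [mul_nonneg hb0.le ht0]
  have ha0 : ∀ i k : ℕ, 0 ≤ ∏ p ∈ Finset.Ioc i k, (1 - b * (p:ℝ)^(-α)) := by
    intro i k
    refine Finset.prod_nonneg fun p hp => hfac0 p ?_
    have := (Finset.mem_Ioc.mp hp).1; omega
  have ha1 : ∀ i k : ℕ, ∏ p ∈ Finset.Ioc i k, (1 - b * (p:ℝ)^(-α)) ≤ 1 := by
    intro i k
    refine Finset.prod_le_one (fun p hp => hfac0 p ?_) (fun p _ => hfac1 p)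
    have := (Finset.mem_Ioc.mp hp).1; omega
  -- product bound on Y
  have hYb : ∀ i k : ℕ, i ≤ k → ∀ u : Fin d → ℝ,
      Real.sqrt ((Y i k *ᵥ u) ⬝ᵥ (Y i k *ᵥ u))
        ≤ (∏ p ∈ Finset.Ioc i k, (1 - b * (p:ℝ)^(-α))) * Real.sqrt (u ⬝ᵥ u) := by
    intro i k hik
    induction k, hik using Nat.le_induction with
    | base => intro u; simp [hY0 i, Matrix.one_mulVec]
    | succ k hik IH =>
        intro u
        rw [hYrec i k hik, ← Matrix.mulVec_mulVec, Finset.prod_Ioc_succ_top hik]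
        have h1 := hstep2 (k+1) (by omega) (Y i k *ᵥ u)
        have h2 := IH u
        have hfp : 0 ≤ 1 - b * ((k+1:ℕ):ℝ)^(-α) := hfac0 (k+1) (by omega)
        calc Real.sqrt (((1 - ηk (k+1) • A) *ᵥ Y i k *ᵥ u) ⬝ᵥ ((1 - ηk (k+1) • A) *ᵥ Y i k *ᵥ u))
            ≤ (1 - b * ((k+1:ℕ):ℝ)^(-α)) * Real.sqrt ((Y i k *ᵥ u) ⬝ᵥ (Y i k *ᵥ u)) := h1
          _ ≤ (1 - b * ((k+1:ℕ):ℝ)^(-α))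
                * ((∏ p ∈ Finset.Ioc i k, (1 - b * (p:ℝ)^(-α))) * Real.sqrt (u ⬝ᵥ u)) :=
              mul_le_mul_of_nonneg_left h2 hfp
          _ = ((∏ p ∈ Finset.Ioc i k, (1 - b * (p:ℝ)^(-α))) * (1 - b * ((k+1:ℕ):ℝ)^(-α)))
                * Real.sqrt (u ⬝ᵥ u) := by ring
  -- op norm bound on Y
  have hnorm : ∀ x : EuclideanSpace ℝ (Fin d),
      ‖x‖ = Real.sqrt ((WithLp.equiv 2 (Fin d → ℝ) x) ⬝ᵥ (WithLp.equiv 2 (Fin d → ℝ) x)) := by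
    intro x
    rw [EuclideanSpace.norm_eq]
    congr 1
    show (∑ i, ‖x i‖ ^ 2) = ∑ i, (x i) * (x i)
    refine Finset.sum_congr rfl fun i _ => ?_
    rw [Real.norm_eq_abs, sq_abs, sq]
  have hYn : ∀ i k : ℕ, i ≤ k →
      ‖Y i k‖ ≤ ∏ p ∈ Finset.Ioc i k, (1 - b * (p:ℝ)^(-α)) := by
    intro i k hik
    rw [Matrix.cstar_norm_def]
    refine ContinuousLinearMap.opNorm_le_bound _ (ha0 i k) fun x => ?_
    rw [hnorm x, hnorm (Matrix.toEuclideanCLM (𝕜 := ℝ) (Y i k) x)]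
    exact hYb i k hik _
  -- choose N
  obtain ⟨N, hN⟩ := exists_nat_ge ((max 1 (2 * α / b)) ^ (1 / (1 - α)))
  have h1α : (0:ℝ) < 1 - α := by linarith
  have hR1 : (1:ℝ) ≤ max 1 (2*α/b) := le_max_left _ _
  have hNcond : α * ((N:ℝ) + 1) ^ (α - 1) ≤ b / 2 := by
    set R := max 1 (2*α/b) with hR
    have hR0 : (0:ℝ) < R := lt_of_lt_of_le one_pos hR1
    have hpow : R = (R ^ (1/(1-α))) ^ (1-α) := by
      rw [← Real.rpow_mul hR0.le, one_div, inv_mul_cancel₀ h1α.ne', Real.rpow_one]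
    have hN1 : R ^ (1/(1-α)) ≤ (N:ℝ) + 1 := by
      have : (N:ℝ) ≤ (N:ℝ) + 1 := by linarith
      linarith [hN]
    have h2 : R ≤ ((N:ℝ)+1) ^ (1-α) := by
      conv_lhs => rw [hpow]
      exact Real.rpow_le_rpow (Real.rpow_nonneg hR0.le _) hN1 h1α.le
    have h3 : 2*α/b ≤ ((N:ℝ)+1)^(1-α) := le_trans (le_max_right _ _) h2
    have hNp : (0:ℝ) < ((N:ℝ)+1)^(1-α) := Real.rpow_pos_of_pos (by positivity) _
    have h4 : ((N:ℝ)+1)^(α-1) = (((N:ℝ)+1)^(1-α))⁻¹ := by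
      rw [← Real.rpow_neg (by positivity)]
      ring_nf
    rw [h4]
    have h5 : (((N:ℝ)+1)^(1-α))⁻¹ ≤ (2*α/b)⁻¹ :=
      inv_anti₀ (by positivity) h3
    have h6 : (2*α/b:ℝ)⁻¹ = b/(2*α) := by rw [inv_div]
    calc α * (((N:ℝ)+1)^(1-α))⁻¹ ≤ α * (b/(2*α)) := by
          refine mul_le_mul_of_nonneg_left ?_ hα0.le
          rw [← h6]; exact h5
      _ = b/2 := by field_simp
  obtain ⟨C, hC⟩ : ∃ C : ℝ, C = (N:ℝ) + 2/b * ((N:ℝ)+1)^α + 2/b := ⟨_, rfl⟩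
  have hCpos : 0 < C := by
    have h1 : (0:ℝ) ≤ (N:ℝ) := Nat.cast_nonneg N
    have h2 : (0:ℝ) ≤ 2/b * ((N:ℝ)+1)^α := by positivity
    have h3 : (0:ℝ) < 2/b := by positivity
    rw [hC]; linarith
  refine ⟨C, hCpos, fun i j => ?_⟩
  have honei : (1:ℝ) ≤ ((i:ℝ)+1)^α :=
    Real.one_le_rpow (by have := Nat.cast_nonneg (α := ℝ) i; linarith) hα0.le
  have hSle : ‖S i j‖ ≤ ∑ k ∈ Finset.Ioc i j, ∏ p ∈ Finset.Ioc i k, (1 - b*(p:ℝ)^(-α)) := by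
    have hIcc : Finset.Icc (i+1) j = Finset.Ioc i j := Finset.Icc_add_one_left_eq_Ioc i j
    rw [hS i j, hIcc]
    refine le_trans (norm_sum_le _ _) (Finset.sum_le_sum fun k hk => ?_)
    exact hYn i k (le_of_lt (Finset.mem_Ioc.mp hk).1)
  rcases le_or_gt N i with hNi | hiN
  · -- large i
    have hcond : α * ((i:ℝ)+1)^(α-1) ≤ b/2 := by
      refine le_trans ?_ hNcond
      refine mul_le_mul_of_nonneg_left ?_ hα0.le
      refine Real.rpow_le_rpow_of_nonpos (by positivity) ?_ (by linarith)
      have : (N:ℝ) ≤ (i:ℝ) := Nat.cast_le.mpr hNi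
      linarith
    have hsum := sum_prod_aux hα0 hα2.le hb0 hb1 i hcond j
    have h2bC : 2/b ≤ C := by
      have h1 : (0:ℝ) ≤ (N:ℝ) := Nat.cast_nonneg N
      have h2 : (0:ℝ) ≤ 2/b * ((N:ℝ)+1)^α := by positivity
      rw [hC]; linarith
    calc ‖S i j‖ ≤ ∑ k ∈ Finset.Ioc i j, ∏ p ∈ Finset.Ioc i k, (1 - b*(p:ℝ)^(-α)) := hSle
      _ ≤ 2/b * ((i:ℝ)+1)^α := hsum
      _ ≤ C * ((i:ℝ)+1)^α := mul_le_mul_of_nonneg_right h2bC (by positivity)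
  · -- small i
    have hsmall : ∑ k ∈ Finset.Ioc i j, ∏ p ∈ Finset.Ioc i k, (1 - b*(p:ℝ)^(-α))
        ≤ (N:ℝ) + 2/b * ((N:ℝ)+1)^α := by
      have hcardle : ∀ m : ℕ, m ≤ N →
          ∑ k ∈ Finset.Ioc i m, ∏ p ∈ Finset.Ioc i k, (1 - b*(p:ℝ)^(-α)) ≤ (N:ℝ) := by
        intro m hm
        calc ∑ k ∈ Finset.Ioc i m, ∏ p ∈ Finset.Ioc i k, (1 - b*(p:ℝ)^(-α))
            ≤ ∑ k ∈ Finset.Ioc i m, (1:ℝ) := Finset.sum_le_sum fun k _ => ha1 i k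
          _ = ((Finset.Ioc i m).card : ℝ) := by rw [Finset.sum_const, nsmul_eq_mul, mul_one]
          _ ≤ (N:ℝ) := by
              rw [Nat.card_Ioc]
              exact_mod_cast (by omega : m - i ≤ N)
      rcases le_or_gt j N with hjN | hNj
      · have h1 := hcardle j hjN
        have h2 : (0:ℝ) ≤ 2/b * ((N:ℝ)+1)^α := by positivity
        linarith
      · have hiN' : i ≤ N := hiN.le
        have hNj' : N ≤ j := hNj.le
        rw [← Finset.sum_Ioc_consecutive _ hiN' hNj']
        have hfirst := hcardle N le_rfl
        have hsecond : ∑ k ∈ Finset.Ioc N j, ∏ p ∈ Finset.Ioc i k, (1 - b*(p:ℝ)^(-α))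
            ≤ 2/b * ((N:ℝ)+1)^α := by
          have hterm : ∀ k ∈ Finset.Ioc N j,
              ∏ p ∈ Finset.Ioc i k, (1 - b*(p:ℝ)^(-α))
                ≤ ∏ p ∈ Finset.Ioc N k, (1 - b*(p:ℝ)^(-α)) := by
            intro k hk
            have hNk : N ≤ k := (Finset.mem_Ioc.mp hk).1.le
            rw [← Finset.prod_Ioc_consecutive _ hiN' hNk]
            exact mul_le_of_le_one_left (ha0 N k) (ha1 i N)
          calc ∑ k ∈ Finset.Ioc N j, ∏ p ∈ Finset.Ioc i k, (1 - b*(p:ℝ)^(-α))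
              ≤ ∑ k ∈ Finset.Ioc N j, ∏ p ∈ Finset.Ioc N k, (1 - b*(p:ℝ)^(-α)) :=
                Finset.sum_le_sum hterm
            _ ≤ 2/b * ((N:ℝ)+1)^α := sum_prod_aux hα0 hα2.le hb0 hb1 N hNcond j
        linarith
    have hCN : (N:ℝ) + 2/b * ((N:ℝ)+1)^α ≤ C := by
      have h3 : (0:ℝ) < 2/b := by positivity
      rw [hC]; linarith
    calc ‖S i j‖ ≤ ∑ k ∈ Finset.Ioc i j, ∏ p ∈ Finset.Ioc i k, (1 - b*(p:ℝ)^(-α)) := hSle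
      _ ≤ (N:ℝ) + 2/b * ((N:ℝ)+1)^α := hsmall
      _ ≤ C := hCN
      _ = C * 1 := (mul_one C).symm
      _ ≤ C * ((i:ℝ)+1)^α := mul_le_mul_of_nonneg_left honei hCpos.le
end

section
/- Let a_k = ⌊C k^{β}⌋ with C > 0, β > 1 and a_1 = 1, and for i ∈ [a_m, a_{m+1}) set t_i = a_m and l_i = i - t_i + 1. If a_M ≤ n < a_{M+1}, then the ratio (∑_{i=1}^{n} l_i) / (∑_{i=1}^{a_{M+1}-1} l_i) converges to 1 as M → ∞. -/
open Finset Real Filter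
set_option maxHeartbeats 1000000

lemma gauss_aux (d : ℕ) : 2 * ∑ j ∈ Finset.range d, (j+1) = d * (d+1) := by
  induction d with
  | zero => simp
  | succ d ih => rw [Finset.sum_range_succ]; nlinarith [ih]

lemma mvt_rpow (β : ℝ) (hβ : 1 ≤ β) (y : ℝ) (hy : 1 ≤ y) :
    (y+1)^β - y^β ≤ β * (y+1)^(β-1) := by
  obtain ⟨c, hc, hc'⟩ := exists_hasDerivAt_eq_slope (fun x => x ^ β)
    (fun x => β * x ^ (β - 1)) (by linarith : y < y + 1)
    (fun x hx => by
      have hx0 : (0:ℝ) < x := lt_of_lt_of_le one_pos (hy.trans hx.1)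
      exact (Real.continuousAt_rpow_const x β (Or.inl hx0.ne')).continuousWithinAt)
    (fun x hx => Real.hasDerivAt_rpow_const (Or.inl (by
      have : (1:ℝ) ≤ x := le_of_lt (lt_of_le_of_lt hy hx.1)
      linarith)))
  have hc1 : (1:ℝ) ≤ c := le_of_lt (lt_of_le_of_lt hy hc.1)
  have heq : β * c ^ (β-1) = (y+1)^β - y^β := by
    rw [hc']; ring_nf
  rw [← heq]
  have hle : c ^ (β-1) ≤ (y+1) ^ (β-1) :=
    Real.rpow_le_rpow (by linarith) (le_of_lt hc.2) (by linarith)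
  nlinarith [Real.rpow_nonneg (show (0:ℝ) ≤ c by linarith) (β-1)]

theorem sum_batch_lengths_ratio_tendsto_one (C β : ℝ) (hC : 0 < C) (hβ : 1 < β)
    (a : ℕ → ℕ) (ha1 : a 1 = 1)
    (ha : ∀ k : ℕ, 2 ≤ k → a k = ⌊C * (k:ℝ) ^ β⌋₊)
    (t l : ℕ → ℕ)
    (ht : ∀ m : ℕ, 1 ≤ m → ∀ i : ℕ, a m ≤ i → i < a (m+1) → t i = a m)
    (hl : ∀ i : ℕ, l i = i - t i + 1)
    (n : ℕ → ℕ) (hn : ∀ M : ℕ, 1 ≤ M → a M ≤ n M ∧ n M < a (M+1)) :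
    Tendsto (fun M : ℕ =>
        (∑ i ∈ Finset.Icc 1 (n M), (l i : ℝ)) /
          (∑ i ∈ Finset.Icc 1 (a (M+1) - 1), (l i : ℝ)))
      atTop (nhds 1) := by
  have hβ0 : (0:ℝ) ≤ β := by linarith
  have lpos : ∀ i, 1 ≤ l i := fun i => by rw [hl]; omega
  have lnn : ∀ i, (0:ℝ) ≤ (l i : ℝ) := fun i => by positivity
  -- choice of k0
  set k0 : ℕ := max 2 ⌈2/C⌉₊ with hk0def
  have hk02 : 2 ≤ k0 := le_max_left _ _
  have hk0R : (2:ℝ) ≤ C * (k0:ℝ)^β := by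
    have h1 : (2:ℝ)/C ≤ (k0:ℝ) :=
      le_trans (Nat.le_ceil _) (Nat.cast_le.mpr (le_max_right _ _))
    have hk01 : (1:ℝ) ≤ (k0:ℝ) := by
      have : (1:ℕ) ≤ k0 := by omega
      exact_mod_cast this
    have h2 : (k0:ℝ) ≤ (k0:ℝ)^β := by
      nth_rewrite 1 [← Real.rpow_one (k0:ℝ)]
      exact Real.rpow_le_rpow_of_exponent_le hk01 (le_of_lt hβ)
    have h3 : (2:ℝ) ≤ C * k0 := by
      rw [div_le_iff₀ hC] at h1; linarith
    nlinarith [mul_le_mul_of_nonneg_left h2 hC.le]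
  have hak0 : 2 ≤ a k0 := by
    rw [ha k0 hk02]
    exact Nat.le_floor (by exact_mod_cast hk0R)
  -- bounds on a
  have aub : ∀ k : ℕ, 2 ≤ k → (a k:ℝ) ≤ C * (k:ℝ)^β := fun k hk => by
    rw [ha k hk]; exact Nat.floor_le (by positivity)
  have alb : ∀ k : ℕ, 2 ≤ k → C * (k:ℝ)^β - 1 ≤ (a k:ℝ) := fun k hk => by
    rw [ha k hk]
    have := Nat.lt_floor_add_one (C * (k:ℝ)^β)
    linarith
  have amono : ∀ j k : ℕ, 2 ≤ j → j ≤ k → a j ≤ a k := by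
    intro j k hj hjk
    rw [ha j hj, ha k (hj.trans hjk)]
    apply Nat.floor_le_floor
    apply mul_le_mul_of_nonneg_left _ hC.le
    exact Real.rpow_le_rpow (Nat.cast_nonneg _) (Nat.cast_le.mpr hjk) hβ0
  -- value of l on blocks
  have lval : ∀ m : ℕ, 1 ≤ m → ∀ i, a m ≤ i → i < a (m+1) → l i = i - a m + 1 :=
    fun m hm i h1 h2 => by rw [hl, ht m hm i h1 h2]
  -- block sum, nat version
  have Bnat : ∀ m : ℕ, 1 ≤ m → 2 * ∑ i ∈ Finset.Ico (a m) (a (m+1)), l i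
      = (a (m+1) - a m) * ((a (m+1) - a m) + 1) := by
    intro m hm
    rw [Finset.sum_Ico_eq_sum_range]
    rw [show ∑ j ∈ Finset.range (a (m+1) - a m), l (a m + j)
        = ∑ j ∈ Finset.range (a (m+1) - a m), (j + 1) from
      Finset.sum_congr rfl fun j hj => by
        rw [Finset.mem_range] at hj
        rw [lval m hm _ (Nat.le_add_right _ _) (by omega)]; omega]
    exact gauss_aux _
  -- block lower bound (real)
  have Blower : ∀ m : ℕ, 2 ≤ m →
      ((a (m+1):ℝ) - a m)^2 ≤ 2 * ∑ i ∈ Finset.Ico (a m) (a (m+1)), (l i:ℝ) := by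
    intro m hm
    have hmono := amono m (m+1) hm (Nat.le_succ _)
    have hd : (a (m+1) - a m) * (a (m+1) - a m)
        ≤ 2 * ∑ i ∈ Finset.Ico (a m) (a (m+1)), l i := by
      rw [Bnat m (by omega)]
      exact Nat.mul_le_mul_left _ (Nat.le_succ _)
    have hcast := (Nat.cast_le (α := ℝ)).mpr hd
    push_cast [Nat.cast_sub hmono] at hcast
    nlinarith [hcast]
  -- block upper bound (real)
  have Bupper : ∀ m : ℕ, 2 ≤ m →
      ∑ i ∈ Finset.Ico (a m) (a (m+1)), (l i:ℝ) ≤ ((a (m+1):ℝ) - a m)^2 := by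
    intro m hm
    have hmono := amono m (m+1) hm (Nat.le_succ _)
    have hnat : ∑ i ∈ Finset.Ico (a m) (a (m+1)), l i
        ≤ (a (m+1) - a m) * (a (m+1) - a m) := by
      have := Finset.sum_le_card_nsmul (Finset.Ico (a m) (a (m+1))) l (a (m+1) - a m)
        (fun i hi => by
          rw [Finset.mem_Ico] at hi
          rw [lval m (by omega) i hi.1 hi.2]; omega)
      simpa [Nat.card_Ico, smul_eq_mul] using this
    have hcast := (Nat.cast_le (α := ℝ)).mpr hnat
    push_cast [Nat.cast_sub hmono] at hcast
    nlinarith [hcast]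
  -- decomposition
  have decomp : ∀ N : ℕ, ∑ i ∈ Finset.Ico (a k0) (a (k0 + N)), (l i:ℝ)
      = ∑ k ∈ Finset.Ico k0 (k0 + N), ∑ i ∈ Finset.Ico (a k) (a (k+1)), (l i:ℝ) := by
    intro N
    induction N with
    | zero => simp
    | succ N ih =>
      rw [show k0 + (N+1) = (k0 + N) + 1 from rfl,
        Finset.sum_Ico_succ_top (Nat.le_add_right _ _), ← ih,
        ← Finset.sum_Ico_consecutive (fun i => (l i:ℝ))
          (amono k0 (k0+N) hk02 (Nat.le_add_right _ _))
          (amono (k0+N) (k0+N+1) (by omega) (by omega))]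
  -- telescope
  have tele : ∀ M : ℕ, k0 ≤ M + 1 →
      ∑ k ∈ Finset.Ico k0 (M+1), ((a (k+1):ℝ) - a k) = (a (M+1):ℝ) - a k0 := by
    intro M hM
    rw [Finset.sum_Ico_eq_sum_range]
    simp only [show ∀ j : ℕ, k0 + j + 1 = k0 + (j + 1) from fun _ => rfl]
    rw [Finset.sum_range_sub (fun j => (a (k0 + j):ℝ)), Nat.add_sub_cancel' hM]
    simp
  -- Cauchy-Schwarz lower bound on the total sum
  have CS : ∀ M : ℕ, k0 ≤ M →
      ((a (M+1):ℝ) - a k0)^2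
        ≤ ((M:ℝ)+1) * (2 * ∑ i ∈ Finset.Ico (a k0) (a (M+1)), (l i:ℝ)) := by
    intro M hM
    have h1 := sq_sum_le_card_mul_sum_sq (s := Finset.Ico k0 (M+1))
      (f := fun k => (a (k+1):ℝ) - a k)
    rw [tele M (by omega)] at h1
    have hdec := decomp (M + 1 - k0)
    rw [Nat.add_sub_cancel' (by omega : k0 ≤ M + 1)] at hdec
    have h2 : ∑ k ∈ Finset.Ico k0 (M+1), ((a (k+1):ℝ) - a k)^2
        ≤ 2 * ∑ i ∈ Finset.Ico (a k0) (a (M+1)), (l i:ℝ) := by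
      rw [hdec, Finset.mul_sum]
      exact Finset.sum_le_sum fun k hk => by
        rw [Finset.mem_Ico] at hk
        exact Blower k (hk02.trans hk.1)
    have hcard : ((Finset.Ico k0 (M+1)).card : ℝ) ≤ (M:ℝ)+1 := by
      rw [Nat.card_Ico]
      have : (M + 1 - k0 : ℕ) ≤ M + 1 := Nat.sub_le _ _
      exact_mod_cast this
    have hsq : (0:ℝ) ≤ ∑ k ∈ Finset.Ico k0 (M+1), ((a (k+1):ℝ) - a k)^2 :=
      Finset.sum_nonneg fun k _ => sq_nonneg _
    calc ((a (M+1):ℝ) - a k0)^2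
        ≤ ((Finset.Ico k0 (M+1)).card : ℝ)
          * ∑ k ∈ Finset.Ico k0 (M+1), ((a (k+1):ℝ) - a k)^2 := h1
      _ ≤ ((M:ℝ)+1) * (2 * ∑ i ∈ Finset.Ico (a k0) (a (M+1)), (l i:ℝ)) := by
          apply mul_le_mul hcard h2 hsq (by positivity)
  -- Icc 1 (x-1) = Ico 1 x
  have hIcc : ∀ x : ℕ, Finset.Icc 1 (x - 1) = Finset.Ico 1 x := by
    intro x; ext i; simp only [Finset.mem_Icc, Finset.mem_Ico]; omega
  -- constant
  obtain ⟨K, hKdef⟩ : ∃ x : ℝ, x = 8 * (C*β+1)^2 / C^2 := ⟨_, rfl⟩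
  have hKpos : 0 < K := by rw [hKdef]; positivity
  -- main eventual bound
  have main : ∀ᶠ M : ℕ in atTop,
      1 - K/((M:ℝ)+1)
        ≤ (∑ i ∈ Finset.Icc 1 (n M), (l i : ℝ)) /
            (∑ i ∈ Finset.Icc 1 (a (M+1) - 1), (l i : ℝ))
      ∧ (∑ i ∈ Finset.Icc 1 (n M), (l i : ℝ)) /
            (∑ i ∈ Finset.Icc 1 (a (M+1) - 1), (l i : ℝ)) ≤ 1 := by
    filter_upwards [eventually_ge_atTop (k0+1),
      eventually_ge_atTop (⌈2*(1+(a k0:ℝ))/C⌉₊)] with M hM hM2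
    have hM1 : 1 ≤ M := by omega
    have hM2' : 2 ≤ M := by omega
    obtain ⟨P, hPdef⟩ : ∃ x : ℝ, x = (M:ℝ) + 1 := ⟨_, rfl⟩
    have hMnn : (0:ℝ) ≤ (M:ℝ) := Nat.cast_nonneg _
    have hP1 : (1:ℝ) ≤ P := by rw [hPdef]; linarith
    have hP0 : (0:ℝ) < P := by linarith
    have hPb : P ≤ P^β := by
      nth_rewrite 1 [← Real.rpow_one P]
      exact Real.rpow_le_rpow_of_exponent_le hP1 (le_of_lt hβ)
    have hCP : 2*(1+(a k0:ℝ)) ≤ C * P := by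
      have h1 : (2*(1+(a k0:ℝ))/C) ≤ (M:ℝ) :=
        le_trans (Nat.le_ceil _) (Nat.cast_le.mpr hM2)
      rw [div_le_iff₀ hC] at h1
      have : (M:ℝ) ≤ P := by rw [hPdef]; linarith
      nlinarith
    have hPcast : ((M+1:ℕ):ℝ) = P := by rw [hPdef]; push_cast; ring
    -- lower bound for a (M+1) - a k0
    have hA : (C/2) * P^β ≤ (a (M+1):ℝ) - a k0 := by
      have h1 := alb (M+1) (by omega)
      rw [hPcast] at h1
      have h2 : (a k0:ℝ) ≤ C * (k0:ℝ)^β := aub k0 hk02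
      have h3 : (C/2) * P^β ≥ 1 + (a k0:ℝ) := by
        nlinarith [mul_le_mul_of_nonneg_left hPb hC.le]
      linarith
    have hApos : (0:ℝ) < (a (M+1):ℝ) - a k0 := by
      have : (0:ℝ) < (C/2) * P^β := by positivity
      linarith
    -- sums
    obtain ⟨S, hSdef⟩ : ∃ x : ℝ, x = ∑ i ∈ Finset.Ico 1 (a (M+1)), (l i:ℝ) := ⟨_, rfl⟩
    obtain ⟨T, hTdef⟩ : ∃ x : ℝ, x = ∑ i ∈ Finset.Ico (a k0) (a (M+1)), (l i:ℝ) := ⟨_, rfl⟩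
    obtain ⟨B, hBdef⟩ : ∃ x : ℝ, x = ∑ i ∈ Finset.Ico (a M) (a (M+1)), (l i:ℝ) := ⟨_, rfl⟩
    have hTS : T ≤ S := by
      rw [hTdef, hSdef]
      apply Finset.sum_le_sum_of_subset_of_nonneg
      · intro i hi
        rw [Finset.mem_Ico] at hi
        exact Finset.mem_Ico.mpr ⟨by omega, hi.2⟩
      · intro i _ _; exact lnn i
    have hTnn : 0 ≤ T := by
      rw [hTdef]; exact Finset.sum_nonneg fun i _ => lnn i
    have hCS := CS M (by omega)
    rw [← hTdef, show ((M:ℝ)+1) = P from hPdef.symm] at hCS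
    have hSlb : ((a (M+1):ℝ) - a k0)^2 ≤ 2 * P * S := by
      calc ((a (M+1):ℝ) - a k0)^2 ≤ P * (2 * T) := hCS
        _ ≤ P * (2 * S) := mul_le_mul_of_nonneg_left (by linarith) hP0.le
        _ = 2 * P * S := by ring
    have hSpos : 0 < S := by
      rcases lt_or_ge 0 S with h | h
      · exact h
      · exfalso
        have hns : 2 * P * S ≤ 0 :=
          mul_nonpos_of_nonneg_of_nonpos (by linarith) h
        have := pow_pos hApos 2
        linarith
    -- upper bound for the numerator
    have hnM := hn M hM1
    have hNS : (∑ i ∈ Finset.Icc 1 (n M), (l i : ℝ)) ≤ S := by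
      rw [hSdef]
      apply Finset.sum_le_sum_of_subset_of_nonneg
      · intro i hi
        rw [Finset.mem_Icc] at hi
        exact Finset.mem_Ico.mpr ⟨hi.1, by omega⟩
      · intro i _ _; exact lnn i
    -- lower bound: S - B ≤ numerator
    have haM1 : 1 ≤ a M := by
      have := amono k0 M hk02 (by omega); omega
    have hsplit : (∑ i ∈ Finset.Ico 1 (a M), (l i:ℝ)) + B = S := by
      rw [hSdef, hBdef]
      exact Finset.sum_Ico_consecutive _ haM1 (amono M (M+1) hM2' (Nat.le_succ _))
    have hlowN : S - B ≤ (∑ i ∈ Finset.Icc 1 (n M), (l i : ℝ)) := by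
      rw [← hsplit]
      have : (∑ i ∈ Finset.Ico 1 (a M), (l i:ℝ))
          ≤ ∑ i ∈ Finset.Icc 1 (n M), (l i : ℝ) := by
        apply Finset.sum_le_sum_of_subset_of_nonneg
        · intro i hi
          rw [Finset.mem_Ico] at hi
          exact Finset.mem_Icc.mpr ⟨hi.1, by omega⟩
        · intro i _ _; exact lnn i
      linarith
    -- bound B
    have hD : (a (M+1):ℝ) - a M ≤ (C*β+1) * P^(β-1) := by
      have h1 := aub (M+1) (by omega)
      rw [hPcast] at h1
      have h2 := alb M hM2'
      have h3 : ((M:ℝ)+1)^β - (M:ℝ)^β ≤ β * ((M:ℝ)+1)^(β-1) :=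
        mvt_rpow β (le_of_lt hβ) (M:ℝ) (by exact_mod_cast hM1)
      rw [← hPdef] at h3
      have h4 : (1:ℝ) ≤ P^(β-1) := by
        nth_rewrite 1 [← Real.rpow_zero P]
        exact Real.rpow_le_rpow_of_exponent_le hP1 (by linarith)
      have hc3 := mul_le_mul_of_nonneg_left h3 hC.le
      have hc3' : C*P^β - C*(M:ℝ)^β ≤ C*β*P^(β-1) := by ring_nf; ring_nf at hc3; linarith
      have hcb : 0 ≤ C*β := by positivity
      nlinarith [hc3', h4, h1, h2]
    have hDnn : (0:ℝ) ≤ (a (M+1):ℝ) - a M := by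
      have h := amono M (M+1) hM2' (Nat.le_succ _)
      have : (a M:ℝ) ≤ a (M+1) := by exact_mod_cast h
      linarith
    have hB : B ≤ ((C*β+1) * P^(β-1))^2 := by
      rw [hBdef]
      exact le_trans (Bupper M hM2') (pow_le_pow_left₀ hDnn hD 2)
    have hBnn : 0 ≤ B := by
      rw [hBdef]; exact Finset.sum_nonneg fun i _ => lnn i
    -- key ratio bound : B / S ≤ K / P
    have hPP : P * P^(β-1) = P^β := by
      nth_rewrite 1 [← Real.rpow_one P]
      rw [← Real.rpow_add hP0]
      norm_num
    have hQpos : 0 < P^(β-1) := Real.rpow_pos_of_pos hP0 _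
    have hkey : 2*P*((C*β+1) * P^(β-1))^2 / ((C/2) * P^β)^2 = K/P := by
      rw [← hPP, hKdef]
      field_simp
      ring
    have hBS : B / S ≤ K / P := by
      have hAl2 : ((C/2) * P^β)^2 ≤ ((a (M+1):ℝ) - a k0)^2 :=
        pow_le_pow_left₀ (by positivity) hA 2
      have step1 : B / S ≤ B / (((a (M+1):ℝ) - a k0)^2 / (2*P)) := by
        apply div_le_div_of_nonneg_left hBnn
          (div_pos (pow_pos hApos 2) (by linarith))
        rw [div_le_iff₀ (by linarith : (0:ℝ) < 2*P)]
        calc ((a (M+1):ℝ) - a k0)^2 ≤ 2 * P * S := hSlb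
          _ = S * (2 * P) := by ring
      have step2 : B / (((a (M+1):ℝ) - a k0)^2 / (2*P))
          = 2*P*B / ((a (M+1):ℝ) - a k0)^2 := by
        rw [div_div_eq_mul_div]
        ring
      have step3 : 2*P*B / ((a (M+1):ℝ) - a k0)^2
          ≤ 2*P*((C*β+1) * P^(β-1))^2 / ((C/2) * P^β)^2 := by
        apply div_le_div₀ (by positivity)
          (mul_le_mul_of_nonneg_left hB (by positivity)) (by positivity) hAl2
      calc B / S ≤ B / (((a (M+1):ℝ) - a k0)^2 / (2*P)) := step1
        _ = 2*P*B / ((a (M+1):ℝ) - a k0)^2 := step2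
        _ ≤ 2*P*((C*β+1) * P^(β-1))^2 / ((C/2) * P^β)^2 := step3
        _ = K/P := hkey
    -- conclude
    rw [hIcc (a (M+1)), ← hSdef, ← hPdef]
    constructor
    · rw [le_div_iff₀ hSpos]
      have h1 : (1 - K/P) * S ≤ (1 - B/S) * S :=
        mul_le_mul_of_nonneg_right (by linarith [hBS]) hSpos.le
      have h2 : (1 - B/S) * S = S - B := by field_simp
      linarith [hlowN]
    · exact div_le_one_of_le₀ hNS hSpos.le
  -- assemble the limit
  have h1 : Tendsto (fun M : ℕ => K/((M:ℝ)+1)) atTop (nhds 0) := by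
    have h := tendsto_one_div_add_atTop_nhds_zero_nat.const_mul K
    simpa [mul_one_div, div_eq_mul_inv] using h
  have h0 : Tendsto (fun M : ℕ => 1 - K/((M:ℝ)+1)) atTop (nhds 1) := by
    simpa using tendsto_const_nhds.sub h1
  exact tendsto_of_tendsto_of_tendsto_of_le_of_le' h0 tendsto_const_nhds
    (main.mono fun M h => h.1) (main.mono fun M h => h.2)
end

section
/- Let A be symmetric positive definite with smallest eigenvalue λ_A > 0, step sizes η_p = η p^{-α} with 1/2 < α < 1, η λ_max(A) ≤ 1, and S_p^n = ∑_{k=p+1}^{n} ∏_{j=p+1}^{k}(I - η_j A). Then ∑_{p=1}^{n} ‖I + S_p^n‖² η_p² ≤ C n for a constant C independent of n. -/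
open Finset Real Matrix
open scoped Matrix.Norms.L2Operator

section Aux

open Filter

lemma euclid_norm_eq {d : ℕ} (x : EuclideanSpace ℝ (Fin d)) :
    ‖x‖ = Real.sqrt ((WithLp.equiv 2 (Fin d → ℝ) x) ⬝ᵥ (WithLp.equiv 2 (Fin d → ℝ) x)) := by
  rw [EuclideanSpace.norm_eq]
  congr 1
  simp [dotProduct, Real.norm_eq_abs, sq_abs, sq]

lemma dot_self_nonneg' {d : ℕ} (v : Fin d → ℝ) : 0 ≤ v ⬝ᵥ v :=
  Finset.sum_nonneg fun _ _ => mul_self_nonneg _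

lemma l2_opNorm_le_bound' {d : ℕ} (M : Matrix (Fin d) (Fin d) ℝ) (C : ℝ) (hC : 0 ≤ C)
    (h : ∀ v : Fin d → ℝ, (M *ᵥ v) ⬝ᵥ (M *ᵥ v) ≤ C ^ 2 * (v ⬝ᵥ v)) : ‖M‖ ≤ C := by
  rw [Matrix.l2_opNorm_def]
  refine ContinuousLinearMap.opNorm_le_bound _ hC ?_
  intro x
  have h1 : ((Matrix.toEuclideanLin.trans LinearMap.toContinuousLinearMap) M) x =
      (WithLp.equiv 2 (Fin d → ℝ)).symm (M *ᵥ (WithLp.equiv 2 (Fin d → ℝ) x)) := rfl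
  rw [h1, euclid_norm_eq, euclid_norm_eq]
  set v := WithLp.equiv 2 (Fin d → ℝ) x with hv
  have h2 : (WithLp.equiv 2 (Fin d → ℝ)) ((WithLp.equiv 2 (Fin d → ℝ)).symm (M *ᵥ v)) = M *ᵥ v := by
    simp
  rw [h2]
  calc Real.sqrt ((M *ᵥ v) ⬝ᵥ (M *ᵥ v)) ≤ Real.sqrt (C ^ 2 * (v ⬝ᵥ v)) := Real.sqrt_le_sqrt (h v)
    _ = C * Real.sqrt (v ⬝ᵥ v) := by
        rw [Real.sqrt_mul (sq_nonneg C), Real.sqrt_sq hC]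

lemma l2_opNorm_one_le {d : ℕ} : ‖(1 : Matrix (Fin d) (Fin d) ℝ)‖ ≤ 1 := by
  apply l2_opNorm_le_bound' _ _ zero_le_one
  intro v
  simp [Matrix.one_mulVec]

lemma dot_mulVec_symm {d : ℕ} {M : Matrix (Fin d) (Fin d) ℝ} (hsymm : Mᵀ = M)
    (x y : Fin d → ℝ) : x ⬝ᵥ M *ᵥ y = (M *ᵥ x) ⬝ᵥ y := by
  rw [Matrix.dotProduct_mulVec, ← Matrix.mulVec_transpose, hsymm]

lemma key_cs {d : ℕ} (M : Matrix (Fin d) (Fin d) ℝ) (hsymm : Mᵀ = M) (β : ℝ)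
    (hβ : 0 ≤ β) (h0 : ∀ v : Fin d → ℝ, 0 ≤ v ⬝ᵥ M *ᵥ v)
    (hub : ∀ v : Fin d → ℝ, v ⬝ᵥ M *ᵥ v ≤ β * (v ⬝ᵥ v))
    (v : Fin d → ℝ) : (M *ᵥ v) ⬝ᵥ (M *ᵥ v) ≤ β ^ 2 * (v ⬝ᵥ v) := by
  set w := M *ᵥ v with hw
  have hquad : ∀ s : ℝ, 0 ≤ (w ⬝ᵥ M *ᵥ w) * (s * s) + (-(2 * (w ⬝ᵥ w))) * s + (v ⬝ᵥ w) := by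
    intro s
    have h := h0 (v - s • w)
    have hMv : M *ᵥ (v - s • w) = w - s • (M *ᵥ w) := by
      rw [Matrix.mulVec_sub, ← hw, Matrix.mulVec_smul]
    rw [hMv] at h
    have hexp : (v - s • w) ⬝ᵥ (w - s • (M *ᵥ w)) =
        (w ⬝ᵥ M *ᵥ w) * (s * s) + (-(2 * (w ⬝ᵥ w))) * s + (v ⬝ᵥ w) := by
      have e1 : v ⬝ᵥ (M *ᵥ w) = w ⬝ᵥ w := by rw [dot_mulVec_symm hsymm, ← hw]
      simp only [sub_dotProduct, dotProduct_sub, smul_dotProduct, dotProduct_smul,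
        smul_eq_mul, e1]
      ring
    rw [hexp] at h
    exact h
  have hdisc := discrim_le_zero hquad
  rw [discrim] at hdisc
  have ha : w ⬝ᵥ M *ᵥ w ≤ β * (w ⬝ᵥ w) := hub w
  have hc : v ⬝ᵥ w ≤ β * (v ⬝ᵥ v) := hub v
  have hc0 : 0 ≤ v ⬝ᵥ w := h0 v
  have hw0 : 0 ≤ w ⬝ᵥ w := dot_self_nonneg' w
  have hv0 : 0 ≤ v ⬝ᵥ v := dot_self_nonneg' v
  rcases eq_or_lt_of_le hw0 with h | h
  · rw [← h]; positivity
  · have h1 : (w ⬝ᵥ w) * (w ⬝ᵥ w) ≤ (β * (w ⬝ᵥ w)) * (β * (v ⬝ᵥ v)) := by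
      calc (w ⬝ᵥ w) * (w ⬝ᵥ w) ≤ (w ⬝ᵥ M *ᵥ w) * (v ⬝ᵥ w) := by nlinarith [hdisc]
        _ ≤ (β * (w ⬝ᵥ w)) * (v ⬝ᵥ w) := mul_le_mul_of_nonneg_right ha hc0
        _ ≤ (β * (w ⬝ᵥ w)) * (β * (v ⬝ᵥ v)) := mul_le_mul_of_nonneg_left hc (by positivity)
    have h2 : (w ⬝ᵥ w) * (w ⬝ᵥ w) ≤ (w ⬝ᵥ w) * (β ^ 2 * (v ⬝ᵥ v)) := by nlinarith [h1]
    exact (mul_le_mul_iff_right₀ h).mp h2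

lemma opNorm_le_of_form {d : ℕ} (M : Matrix (Fin d) (Fin d) ℝ) (hsymm : Mᵀ = M) (β : ℝ)
    (hβ : 0 ≤ β) (h0 : ∀ v : Fin d → ℝ, 0 ≤ v ⬝ᵥ M *ᵥ v)
    (hub : ∀ v : Fin d → ℝ, v ⬝ᵥ M *ᵥ v ≤ β * (v ⬝ᵥ v)) : ‖M‖ ≤ β := by
  apply l2_opNorm_le_bound' _ _ hβ
  exact key_cs M hsymm β hβ h0 hub

lemma mvt_rpow_s19 {α : ℝ} (hα0 : 0 < α) (hα2 : α < 1) :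
    ∀ x : ℝ, 1 ≤ x → (x + 1) ^ α - x ^ α ≤ α * x ^ (α - 1) := by
  intro x hx
  have hx0 : 0 < x := lt_of_lt_of_le one_pos hx
  have hcont : ContinuousOn (fun y : ℝ => y ^ α) (Set.Icc x (x + 1)) := by
    intro y hy
    have hy0 : y ≠ 0 := by
      have := hy.1; intro h; rw [h] at this; linarith
    exact (Real.continuousAt_rpow_const y α (Or.inl hy0)).continuousWithinAt
  have hderiv : ∀ y ∈ Set.Ioo x (x + 1),
      HasDerivAt (fun y : ℝ => y ^ α) (α * y ^ (α - 1)) y := by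
    intro y hy
    exact Real.hasDerivAt_rpow_const (Or.inl (by nlinarith [hy.1]))
  obtain ⟨ξ, hξ, heq⟩ := exists_hasDerivAt_eq_slope (fun y : ℝ => y ^ α)
    (fun y => α * y ^ (α - 1)) (by linarith) hcont hderiv
  have hle : α * ξ ^ (α - 1) ≤ α * x ^ (α - 1) := by
    have : ξ ^ (α - 1) ≤ x ^ (α - 1) :=
      Real.rpow_le_rpow_of_nonpos hx0 (le_of_lt hξ.1) (by linarith)
    exact mul_le_mul_of_nonneg_left this (le_of_lt hα0)
  have : ((x + 1) ^ α - x ^ α) / (x + 1 - x) = α * ξ ^ (α - 1) := heq.symm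
  rw [show x + 1 - x = 1 by ring, div_one] at this
  linarith

lemma exists_p0 {α c : ℝ} (hα0 : 0 < α) (hα1 : α < 1) (hc : 0 < c) :
    ∃ p0 : ℕ, 1 ≤ p0 ∧ ∀ p : ℕ, p0 ≤ p → α * (p : ℝ) ^ (α - 1) ≤ c / 2 := by
  have htend : Tendsto (fun p : ℕ => ((p : ℝ)) ^ (α - 1)) atTop (nhds 0) := by
    have h1 : Tendsto (fun x : ℝ => x ^ (-(1 - α))) atTop (nhds 0) :=
      tendsto_rpow_neg_atTop (by linarith)
    have h2 := h1.comp (tendsto_natCast_atTop_atTop (R := ℝ))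
    have heq : (fun p : ℕ => ((p : ℝ)) ^ (α - 1)) =
        (fun x : ℝ => x ^ (-(1 - α))) ∘ (Nat.cast : ℕ → ℝ) := by
      funext p
      show ((p : ℝ)) ^ (α - 1) = ((p : ℝ)) ^ (-(1 - α))
      congr 1
      ring
    rw [heq]
    exact h2
  have hev : ∀ᶠ p : ℕ in atTop, ((p : ℝ)) ^ (α - 1) < c / (2 * α) := by
    apply htend.eventually_lt_const
    positivity
  obtain ⟨N, hN⟩ := eventually_atTop.mp hev
  refine ⟨max N 1, le_max_right _ _, fun p hp => ?_⟩
  have := hN p (le_trans (le_max_left _ _) hp)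
  rw [div_mul_eq_div_div] at this
  have h3 : α * ((p:ℝ) ^ (α - 1)) ≤ α * (c / 2 / α) :=
    mul_le_mul_of_nonneg_left this.le hα0.le
  rw [mul_div_cancel₀ _ (ne_of_gt hα0)] at h3
  linarith

end Aux

set_option maxHeartbeats 1000000 in
theorem sum_sq_opNorm_one_add_S_mul_step_le
    (d : ℕ) (A : Matrix (Fin d) (Fin d) ℝ) (hA : A.PosDef)
    (lamA lamMax η α : ℝ) (hlamA : 0 < lamA)
    (hmin : ∀ x : Fin d → ℝ, lamA * (x ⬝ᵥ x) ≤ x ⬝ᵥ A.mulVec x)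
    (hmax : ∀ x : Fin d → ℝ, x ⬝ᵥ A.mulVec x ≤ lamMax * (x ⬝ᵥ x))
    (hη : 0 < η) (hα1 : 1/2 < α) (hα2 : α < 1)
    (hstep : η * lamMax ≤ 1)
    (ηp : ℕ → ℝ) (hηp : ∀ p : ℕ, ηp p = η * (p:ℝ) ^ (-α))
    (Y : ℕ → ℕ → Matrix (Fin d) (Fin d) ℝ)
    (hY0 : ∀ p : ℕ, Y p p = 1)
    (hYrec : ∀ p k : ℕ, p ≤ k → Y p (k+1) = (1 - ηp (k+1) • A) * Y p k)
    (S : ℕ → ℕ → Matrix (Fin d) (Fin d) ℝ)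
    (hS : ∀ p n : ℕ, S p n = ∑ k ∈ Finset.Icc (p+1) n, Y p k) :
    ∃ C : ℝ, 0 < C ∧ ∀ n : ℕ,
      ∑ p ∈ Finset.Icc 1 n, ‖(1 : Matrix (Fin d) (Fin d) ℝ) + S p n‖^2 * (ηp p)^2 ≤
        C * n := by
  by_cases hd : d = 0
  · subst hd
    refine ⟨1, one_pos, fun n => ?_⟩
    have hz : ∀ p : ℕ, (1 : Matrix (Fin 0) (Fin 0) ℝ) + S p n = 0 := by
      intro p; ext i j; exact i.elim0
    calc ∑ p ∈ Finset.Icc 1 n, ‖(1 : Matrix (Fin 0) (Fin 0) ℝ) + S p n‖^2 * (ηp p)^2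
        = ∑ p ∈ Finset.Icc 1 n, (0:ℝ) := by
          refine Finset.sum_congr rfl fun p _ => ?_
          rw [hz p, norm_zero]
          ring
      _ = 0 := Finset.sum_const_zero
      _ ≤ 1 * n := by positivity
  -- main case
  have hα0 : 0 < α := by linarith
  obtain ⟨e, he⟩ : ∃ e : Fin d → ℝ, e ⬝ᵥ e = 1 := by
    refine ⟨Pi.single (⟨0, Nat.pos_of_ne_zero hd⟩ : Fin d) 1, ?_⟩
    simp [dotProduct, Pi.single_apply]
  have hlamle : lamA ≤ lamMax := by
    have h1 := hmin e
    have h2 := hmax e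
    rw [he] at h1 h2
    linarith
  have hlamMax0 : 0 < lamMax := lt_of_lt_of_le hlamA hlamle
  set c : ℝ := η * lamA with hcdef
  have hc0 : 0 < c := mul_pos hη hlamA
  have hc1 : c ≤ 1 := le_trans (by nlinarith) hstep
  have Asymm : Aᵀ = A := by
    have h := hA.1
    ext i j
    have := congrFun (congrFun h i) j
    simpa [Matrix.conjTranspose_apply] using this
  -- contraction factor bound
  have hfac : ∀ p : ℕ, ‖(1 : Matrix (Fin d) (Fin d) ℝ) - ηp (p+1) • A‖ ≤
      1 - c * ((p:ℝ) + 1) ^ (-α) := by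
    intro p
    set q : ℝ := (p:ℝ) + 1 with hqdef
    have hqpos : 0 < q := by positivity
    have hq1 : 1 ≤ q := by
      rw [hqdef]
      have : (0:ℝ) ≤ (p:ℝ) := Nat.cast_nonneg p
      linarith
    have hqa0 : 0 ≤ q ^ (-α) := Real.rpow_nonneg hqpos.le _
    have hqa1 : q ^ (-α) ≤ 1 :=
      Real.rpow_le_one_of_one_le_of_nonpos hq1 (by linarith)
    have ht : ηp (p+1) = η * q ^ (-α) := by
      rw [hηp]
      congr 2
      push_cast
      ring
    set t : ℝ := η * q ^ (-α) with htdef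
    have ht0 : 0 ≤ t := by positivity
    have htmax : t * lamMax ≤ 1 := by
      calc t * lamMax = (η * lamMax) * q ^ (-α) := by ring
        _ ≤ 1 * 1 := mul_le_mul hstep hqa1 hqa0 one_pos.le
        _ = 1 := one_mul 1
    have htA : t * lamA = c * q ^ (-α) := by rw [hcdef]; ring
    have hβ0 : 0 ≤ 1 - c * q ^ (-α) := by nlinarith
    rw [ht]
    apply opNorm_le_of_form _ ?_ _ hβ0
    · intro v
      have hMv : ((1 : Matrix (Fin d) (Fin d) ℝ) - t • A) *ᵥ v = v - t • (A *ᵥ v) := by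
        rw [Matrix.sub_mulVec, Matrix.one_mulVec, Matrix.smul_mulVec]
      rw [hMv]
      simp only [dotProduct_sub, dotProduct_smul, smul_eq_mul]
      have h1 := mul_le_mul_of_nonneg_left (hmax v) ht0
      have h2 := mul_le_mul_of_nonneg_right htmax (dot_self_nonneg' v)
      nlinarith
    · intro v
      have hMv : ((1 : Matrix (Fin d) (Fin d) ℝ) - t • A) *ᵥ v = v - t • (A *ᵥ v) := by
        rw [Matrix.sub_mulVec, Matrix.one_mulVec, Matrix.smul_mulVec]
      rw [hMv]
      simp only [dotProduct_sub, dotProduct_smul, smul_eq_mul]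
      have h1 := mul_le_mul_of_nonneg_left (hmin v) ht0
      nlinarith [dot_self_nonneg' v]
    · rw [Matrix.transpose_sub, Matrix.transpose_smul, Matrix.transpose_one, Asymm]
  -- factorization of Y and S
  have hYfac : ∀ p k : ℕ, p + 1 ≤ k →
      Y p k = Y (p+1) k * ((1 : Matrix (Fin d) (Fin d) ℝ) - ηp (p+1) • A) := by
    intro p k hk
    induction k, hk using Nat.le_induction with
    | base => rw [hYrec p p le_rfl, hY0, hY0, mul_one, one_mul]
    | succ k hk ih =>
      rw [hYrec p k (by omega), ih, hYrec (p+1) k (by omega), mul_assoc]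
  have hSempty : ∀ n p : ℕ, n ≤ p → S p n = 0 := by
    intro n p hnp
    rw [hS, Finset.Icc_eq_empty (by omega), Finset.sum_empty]
  have hSfac : ∀ p n : ℕ, p + 1 ≤ n →
      S p n = (1 + S (p+1) n) * ((1 : Matrix (Fin d) (Fin d) ℝ) - ηp (p+1) • A) := by
    intro p n hpn
    rw [hS]
    have hsplit : Finset.Icc (p+1) n = insert (p+1) (Finset.Icc (p+2) n) := by
      ext x
      simp only [Finset.mem_Icc, Finset.mem_insert]
      omega
    have hnotmem : (p+1) ∉ Finset.Icc (p+2) n := by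
      simp only [Finset.mem_Icc]
      omega
    rw [hsplit, Finset.sum_insert hnotmem]
    have hcong : ∑ k ∈ Finset.Icc (p+2) n, Y p k =
        ∑ k ∈ Finset.Icc (p+2) n, Y (p+1) k * ((1 : Matrix (Fin d) (Fin d) ℝ) - ηp (p+1) • A) := by
      refine Finset.sum_congr rfl fun k hk => ?_
      refine hYfac p k ?_
      simp only [Finset.mem_Icc] at hk
      omega
    rw [hcong, ← Finset.sum_mul, hYfac p (p+1) le_rfl, hY0, ← hS, add_mul, one_mul]
  -- one-step norm recursion
  have hstep' : ∀ n p : ℕ, p + 1 ≤ n →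
      ‖S p n‖ ≤ (1 - c * ((p:ℝ) + 1) ^ (-α)) * (1 + ‖S (p+1) n‖) := by
    intro n p hpn
    rw [hSfac p n hpn]
    have hadd : ‖(1 : Matrix (Fin d) (Fin d) ℝ) + S (p+1) n‖ ≤ 1 + ‖S (p+1) n‖ := by
      calc ‖(1 : Matrix (Fin d) (Fin d) ℝ) + S (p+1) n‖
          ≤ ‖(1 : Matrix (Fin d) (Fin d) ℝ)‖ + ‖S (p+1) n‖ := norm_add_le _ _
        _ ≤ 1 + ‖S (p+1) n‖ := by linarith [l2_opNorm_one_le (d := d)]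
    calc ‖(1 + S (p+1) n) * ((1 : Matrix (Fin d) (Fin d) ℝ) - ηp (p+1) • A)‖
        ≤ ‖(1 : Matrix (Fin d) (Fin d) ℝ) + S (p+1) n‖ *
          ‖(1 : Matrix (Fin d) (Fin d) ℝ) - ηp (p+1) • A‖ := Matrix.l2_opNorm_mul _ _
      _ ≤ (1 + ‖S (p+1) n‖) * (1 - c * ((p:ℝ) + 1) ^ (-α)) := by
          refine mul_le_mul hadd (hfac p) (norm_nonneg _) ?_
          linarith [norm_nonneg (S (p+1) n)]
      _ = (1 - c * ((p:ℝ) + 1) ^ (-α)) * (1 + ‖S (p+1) n‖) := mul_comm _ _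
  -- choose p0 and M
  obtain ⟨p0, hp01, hp0⟩ := exists_p0 hα0 hα2 hc0
  set M : ℝ := 2 / c with hMdef
  have hM0 : 0 < M := by positivity
  have hMc : M * c = 2 := by
    rw [hMdef]
    field_simp
  -- main bound for p ≥ p0
  have hKbig : ∀ n m p : ℕ, p0 ≤ p → n ≤ p + m → ‖S p n‖ ≤ M * (p:ℝ) ^ α := by
    intro n m
    induction m with
    | zero =>
      intro p hp hnp
      rw [hSempty n p (by omega), norm_zero]
      exact mul_nonneg hM0.le (Real.rpow_nonneg (Nat.cast_nonneg p) α)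
    | succ m ih =>
      intro p hp hnp
      by_cases hn : n ≤ p
      · rw [hSempty n p hn, norm_zero]
        exact mul_nonneg hM0.le (Real.rpow_nonneg (Nat.cast_nonneg p) α)
      · push_neg at hn
        have h1 := hstep' n p (by omega)
        have h2 := ih (p+1) (by omega) (by omega)
        have hcast : ((p+1 : ℕ) : ℝ) = (p:ℝ) + 1 := by push_cast; ring
        rw [hcast] at h2
        set q : ℝ := (p:ℝ) + 1 with hqdef
        have hp1R : 1 ≤ (p:ℝ) := by exact_mod_cast le_trans hp01 hp
        have hqpos : 0 < q := by positivity
        have hq1 : 1 ≤ q := by linarith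
        have hqa0 : 0 ≤ q ^ (-α) := Real.rpow_nonneg hqpos.le _
        have hqa1 : q ^ (-α) ≤ 1 :=
          Real.rpow_le_one_of_one_le_of_nonpos hq1 (by linarith)
        have hβ0 : 0 ≤ 1 - c * q ^ (-α) := by nlinarith
        have hqq : q ^ (-α) * q ^ α = 1 := by
          rw [← Real.rpow_add hqpos]
          simp
        have hmvt : q ^ α - (p:ℝ) ^ α ≤ α * (p:ℝ) ^ (α - 1) :=
          mvt_rpow_s19 hα0 hα2 (p:ℝ) hp1R
        have hsmall : α * (p:ℝ) ^ (α - 1) ≤ c / 2 := hp0 p hp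
        have hmono : (1 - c * q ^ (-α)) * (1 + ‖S (p+1) n‖) ≤
            (1 - c * q ^ (-α)) * (1 + M * q ^ α) :=
          mul_le_mul_of_nonneg_left (by linarith) hβ0
        have hfinal : (1 - c * q ^ (-α)) * (1 + M * q ^ α) ≤ M * (p:ℝ) ^ α := by
          have hexp : (1 - c * q ^ (-α)) * (1 + M * q ^ α) =
              1 + M * q ^ α - c * q ^ (-α) - (M * c) * (q ^ (-α) * q ^ α) := by ring
          rw [hexp, hqq, hMc, mul_one]
          have hM1 : M * (α * (p:ℝ) ^ (α - 1)) ≤ M * (c / 2) :=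
            mul_le_mul_of_nonneg_left hsmall hM0.le
          have hM2 : M * (q ^ α - (p:ℝ) ^ α) ≤ M * (α * (p:ℝ) ^ (α - 1)) :=
            mul_le_mul_of_nonneg_left hmvt hM0.le
          have hM3 : M * (c / 2) = 1 := by linarith [hMc]
          have hcq : 0 ≤ c * q ^ (-α) := mul_nonneg hc0.le hqa0
          linarith [hM1, hM2, hM3, hcq]
        linarith
  -- bound below p0
  have hKsmall : ∀ n j p : ℕ, p + j = p0 → ‖S p n‖ ≤ (j:ℝ) + M * (p0:ℝ) ^ α := by
    intro n j
    induction j with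
    | zero =>
      intro p hp
      have hpp : p = p0 := by omega
      subst hpp
      have := hKbig n n p le_rfl (by omega)
      push_cast
      linarith
    | succ j ih =>
      intro p hp
      have hMp0 : 0 ≤ M * (p0:ℝ) ^ α :=
        mul_nonneg hM0.le (Real.rpow_nonneg (Nat.cast_nonneg p0) α)
      by_cases hn : n ≤ p
      · rw [hSempty n p hn, norm_zero]
        push_cast
        positivity
      · push_neg at hn
        have h1 := hstep' n p (by omega)
        have h2 := ih (p+1) (by omega)
        have hqpos : (0:ℝ) < (p:ℝ) + 1 := by positivity
        have hqa0 : 0 ≤ ((p:ℝ) + 1) ^ (-α) := Real.rpow_nonneg hqpos.le _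
        have hle1 : 1 - c * ((p:ℝ) + 1) ^ (-α) ≤ 1 := by nlinarith
        have hb0 : 0 ≤ 1 + ‖S (p+1) n‖ := by linarith [norm_nonneg (S (p+1) n)]
        have h3 : (1 - c * ((p:ℝ) + 1) ^ (-α)) * (1 + ‖S (p+1) n‖) ≤ 1 + ‖S (p+1) n‖ :=
          mul_le_of_le_one_left hb0 hle1
        push_cast
        linarith
  -- combined bound
  set K : ℝ := (p0:ℝ) + M * (p0:ℝ) ^ α + M with hKdef
  have hK0 : 0 < K := by
    have h1 : (0:ℝ) < (p0:ℝ) := by exact_mod_cast hp01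
    have h2 : 0 ≤ M * (p0:ℝ) ^ α :=
      mul_nonneg hM0.le (Real.rpow_nonneg (Nat.cast_nonneg p0) α)
    rw [hKdef]
    linarith
  have hfin : ∀ n p : ℕ, 1 ≤ p → ‖S p n‖ ≤ K * (p:ℝ) ^ α := by
    intro n p hp
    have hp1R : 1 ≤ (p:ℝ) := by exact_mod_cast hp
    have hpα1 : 1 ≤ (p:ℝ) ^ α := Real.one_le_rpow hp1R hα0.le
    have hpα0 : 0 ≤ (p:ℝ) ^ α := by linarith
    by_cases hpp : p0 ≤ p
    · have h1 := hKbig n n p hpp (by omega)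
      have h2 : M ≤ K := by
        have : 0 ≤ (p0:ℝ) + M * (p0:ℝ) ^ α := by
          have : 0 ≤ M * (p0:ℝ) ^ α :=
            mul_nonneg hM0.le (Real.rpow_nonneg (Nat.cast_nonneg p0) α)
          have hh : (0:ℝ) ≤ (p0:ℝ) := Nat.cast_nonneg p0
          linarith
        rw [hKdef]
        linarith
      calc ‖S p n‖ ≤ M * (p:ℝ) ^ α := h1
        _ ≤ K * (p:ℝ) ^ α := mul_le_mul_of_nonneg_right h2 hpα0
    · push_neg at hpp
      have h1 := hKsmall n (p0 - p) p (by omega)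
      have hjle : ((p0 - p : ℕ):ℝ) ≤ (p0:ℝ) := by
        exact_mod_cast Nat.sub_le p0 p
      have h2 : ‖S p n‖ ≤ K := by
        rw [hKdef]
        linarith
      calc ‖S p n‖ ≤ K := h2
        _ ≤ K * (p:ℝ) ^ α := le_mul_of_one_le_right hK0.le hpα1
  -- final assembly
  refine ⟨((1 + K) * η) ^ 2, by positivity, fun n => ?_⟩
  have hterm : ∀ p ∈ Finset.Icc 1 n,
      ‖(1 : Matrix (Fin d) (Fin d) ℝ) + S p n‖^2 * (ηp p)^2 ≤ ((1 + K) * η) ^ 2 := by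
    intro p hp
    rw [Finset.mem_Icc] at hp
    have hp1 : 1 ≤ p := hp.1
    have hp1R : 1 ≤ (p:ℝ) := by exact_mod_cast hp1
    have hppos : (0:ℝ) < (p:ℝ) := by linarith
    have hpα1 : 1 ≤ (p:ℝ) ^ α := Real.one_le_rpow hp1R hα0.le
    have hηp0 : 0 ≤ ηp p := by
      rw [hηp]
      positivity
    have h1 : ‖(1 : Matrix (Fin d) (Fin d) ℝ) + S p n‖ ≤ (1 + K) * (p:ℝ) ^ α := by
      calc ‖(1 : Matrix (Fin d) (Fin d) ℝ) + S p n‖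
          ≤ ‖(1 : Matrix (Fin d) (Fin d) ℝ)‖ + ‖S p n‖ := norm_add_le _ _
        _ ≤ 1 + K * (p:ℝ) ^ α := by
            linarith [l2_opNorm_one_le (d := d), hfin n p hp1]
        _ ≤ (1 + K) * (p:ℝ) ^ α := by nlinarith
    have h2 : ‖(1 : Matrix (Fin d) (Fin d) ℝ) + S p n‖ * ηp p ≤ (1 + K) * η := by
      have hx : ((1 + K) * (p:ℝ) ^ α) * (η * (p:ℝ) ^ (-α)) = (1 + K) * η := by
        have hq : (p:ℝ) ^ α * (p:ℝ) ^ (-α) = 1 := by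
          rw [← Real.rpow_add hppos]
          simp
        calc ((1 + K) * (p:ℝ) ^ α) * (η * (p:ℝ) ^ (-α))
            = ((1 + K) * η) * ((p:ℝ) ^ α * (p:ℝ) ^ (-α)) := by ring
          _ = (1 + K) * η := by rw [hq, mul_one]
      calc ‖(1 : Matrix (Fin d) (Fin d) ℝ) + S p n‖ * ηp p
          ≤ ((1 + K) * (p:ℝ) ^ α) * (ηp p) := mul_le_mul_of_nonneg_right h1 hηp0
        _ = ((1 + K) * (p:ℝ) ^ α) * (η * (p:ℝ) ^ (-α)) := by rw [hηp]
        _ = (1 + K) * η := hx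
    calc ‖(1 : Matrix (Fin d) (Fin d) ℝ) + S p n‖^2 * (ηp p)^2
        = (‖(1 : Matrix (Fin d) (Fin d) ℝ) + S p n‖ * ηp p) ^ 2 := by ring
      _ ≤ ((1 + K) * η) ^ 2 := by
          apply pow_le_pow_left₀ (mul_nonneg (norm_nonneg _) hηp0) h2
  calc ∑ p ∈ Finset.Icc 1 n, ‖(1 : Matrix (Fin d) (Fin d) ℝ) + S p n‖^2 * (ηp p)^2
      ≤ ∑ p ∈ Finset.Icc 1 n, ((1 + K) * η) ^ 2 := Finset.sum_le_sum hterm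
    _ = (Finset.Icc 1 n).card * ((1 + K) * η) ^ 2 := by
        rw [Finset.sum_const, nsmul_eq_mul]
    _ = ((1 + K) * η) ^ 2 * n := by
        rw [Nat.card_Icc]
        push_cast
        ring
end
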